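/- In the erasure game where both players know the state S, the max-min value to Player A is 3/4, attained by Player A playing A=S with probability 1/4 and A=e with probability 3/4 (for each state s). -/

import Mathlib

inductive ActA | a0 | ae | a1
deriving DecidableEq

instance : Fintype ActA where
  elems := {ActA.a0, ActA.ae, ActA.a1}
  complete := by intro x; cases x <;> simp

noncomputable def payoff (M : ℝ) (a : ActA) (b s : Bool) : ℝ :=
  match a with
  | .a0 => if s then -M else (if b then 0 else 3)
  | .a1 => if s then (if b then 3 else 0) else -M
  | .ae => if b = s then 0 else 1

def IsDist {α : Type*} [Fintype α] (p : α → ℝ) : Prop :=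
  (∀ x, 0 ≤ p x) ∧ ∑ x, p x = 1

/-- Expected payoff when both players know the uniform state. -/
noncomputable def expPayAB (M : ℝ) (pa : Bool → ActA → ℝ) (pb : Bool → Bool → ℝ) : ℝ :=
  (1/2) * ∑ s : Bool, ∑ a : ActA, ∑ b : Bool, pa s a * pb s b * payoff M a b s

/-- Player A plays A = S with probability 1/4 and A = e with probability 3/4. -/
noncomputable def paStar : Bool → ActA → ℝ :=
  fun s a => if a = ActA.ae then 3/4 else
    if a = (if s then ActA.a1 else ActA.a0) then 1/4 else 0

lemma sumActA (f : ActA → ℝ) : ∑ a, f a = f .a0 + f .ae + f .a1 := by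
  have : (Finset.univ : Finset ActA) = {.a0, .ae, .a1} := by decide
  rw [this]; simp [Finset.sum_insert, Finset.mem_insert]; ring

/-- If both players know the state, the max-min value of the erasure game is 3/4,
attained by playing A = S w.p. 1/4 and A = e w.p. 3/4 (for all large M). -/
theorem stmt6 : ∃ M0 : ℝ, ∀ M ≥ M0,
    (∀ s, IsDist (paStar s)) ∧
    (∀ pb : Bool → Bool → ℝ, (∀ s, IsDist (pb s)) → expPayAB M paStar pb = 3/4) ∧
    (∀ pa : Bool → ActA → ℝ, (∀ s, IsDist (pa s)) →
      ∃ pb : Bool → Bool → ℝ, (∀ s, IsDist (pb s)) ∧ expPayAB M pa pb ≤ 3/4) := by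
  refine ⟨0, fun M hM => ⟨?_, ?_, ?_⟩⟩
  · intro s
    constructor
    · intro x
      cases s <;> cases x <;> simp [paStar] <;> norm_num
    · rw [sumActA]
      cases s <;> simp [paStar] <;> norm_num
  · intro pb hpb
    have h0 := (hpb false).2
    have h1 := (hpb true).2
    rw [Fintype.sum_bool] at h0 h1
    unfold expPayAB
    rw [Fintype.sum_bool]
    rw [sumActA, sumActA]
    simp [Fintype.sum_bool, payoff, paStar]
    norm_num [reduceCtorEq]
    linarith
  · intro pa hpa
    refine ⟨fun s b => if b = s then 1/4 else 3/4, ?_, ?_⟩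
    · intro s
      constructor
      · intro x; cases x <;> cases s <;> norm_num
      · rw [Fintype.sum_bool]; cases s <;> norm_num
    · have h0 := (hpa false).2
      have h1 := (hpa true).2
      rw [sumActA] at h0 h1
      have n0 := (hpa false).1 ActA.a1
      have n1 := (hpa true).1 ActA.a0
      unfold expPayAB
      rw [Fintype.sum_bool]
      rw [sumActA, sumActA]
      simp [Fintype.sum_bool, payoff]
      norm_num [reduceCtorEq]
      nlinarith [mul_nonneg hM.le n0, mul_nonneg hM.le n1]
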